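/- Let X be a metric space, f : X → X continuous, and L : X → ℝ a continuous function with L(f(x)) ≤ L(x) for all x. If X is compact and x ∈ X, then the ω-limit set of x under f is contained in the neutral set N(L) = {y ∈ X : L(f(y)) = L(y)}. -/

import Mathlib

open Filter Topology

/-- for a continuous map f of a compact metric space with a
continuous Lyapunov function L, the ω-limit set of any point is contained in
the neutral set {y : L(f(y)) = L(y)}. -/
theorem stmt_13 (X : Type*) [MetricSpace X] [CompactSpace X]
    (f : X → X) (hf : Continuous f)
    (L : X → ℝ) (hL : Continuous L) (hLyap : ∀ x, L (f x) ≤ L x)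
    (x y : X) (φ : ℕ → ℕ) (hφ : StrictMono φ)
    (hy : Tendsto (fun n => f^[φ n] x) atTop (𝓝 y)) :
    L (f y) = L y := by
  -- The sequence a n = L (f^[n] x) is antitone and bounded below, hence converges.
  set a : ℕ → ℝ := fun n => L (f^[n] x) with ha
  have hanti : Antitone a := antitone_nat_of_succ_le fun n => by
    simp only [ha, Function.iterate_succ_apply']
    exact hLyap _
  have hbdd : BddBelow (Set.range a) := by
    obtain ⟨C, hC⟩ := ((isCompact_range hL)).bddBelow
    exact ⟨C, fun r ⟨n, hn⟩ => hn ▸ hC ⟨_, rfl⟩⟩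
  have hconv : Tendsto a atTop (𝓝 (⨅ n, a n)) :=
    tendsto_atTop_ciInf hanti hbdd
  -- subsequence also converges to the same limit
  have h1 : Tendsto (fun n => a (φ n)) atTop (𝓝 (⨅ n, a n)) :=
    hconv.comp hφ.tendsto_atTop
  have h2 : Tendsto (fun n => a (φ n + 1)) atTop (𝓝 (⨅ n, a n)) :=
    hconv.comp ((tendsto_add_atTop_nat 1).comp hφ.tendsto_atTop)
  -- L y = lim a (φ n)
  have hLy : Tendsto (fun n => a (φ n)) atTop (𝓝 (L y)) := (hL.tendsto y).comp hy
  -- L (f y) = lim a (φ n + 1)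
  have hLfy : Tendsto (fun n => a (φ n + 1)) atTop (𝓝 (L (f y))) := by
    have : Tendsto (fun n => f (f^[φ n] x)) atTop (𝓝 (f y)) := (hf.tendsto y).comp hy
    have := (hL.tendsto (f y)).comp this
    simpa [ha, Function.iterate_succ_apply', Function.comp_def] using this
  have e1 : L y = ⨅ n, a n := tendsto_nhds_unique hLy h1
  have e2 : L (f y) = ⨅ n, a n := tendsto_nhds_unique hLfy h2
  rw [e1, e2]
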